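/- arXiv:2306.04522 — 3 statements merged into one kernel-verified Lean document; each statement's English description precedes it below -/
import Mathlib

section
/- Let f : [0,∞) → (0,∞) be C¹ and nonincreasing, and let ρ : ℝ → (0,∞) be a C², 2π-periodic function with ∫₀^{2π} f(ρ(θ)) dθ = 2π f(r) for some r > 0. Then ∫₀^{2π} ((ρ² + 2ρ'² - ρρ'')/(ρ² + ρ'²)) f(ρ) dθ ≤ 2π f(r). -/
open Real intervalIntegral

/-- Two-dimensional weighted curvature inequality in polar coordinates. -/
theorem weighted_curvature_ineq (f ρ : ℝ → ℝ) (r : ℝ) (hr : 0 < r)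
    (hf : ContDiffOn ℝ 1 f (Set.Ici 0))
    (hfpos : ∀ x ∈ Set.Ici (0 : ℝ), 0 < f x)
    (hfmono : AntitoneOn f (Set.Ici 0))
    (hρ : ContDiff ℝ 2 ρ) (hρpos : ∀ θ, 0 < ρ θ)
    (hper : Function.Periodic ρ (2 * π))
    (hmean : ∫ θ in (0:ℝ)..(2 * π), f (ρ θ) = 2 * π * f r) :
    ∫ θ in (0:ℝ)..(2 * π),
        ((ρ θ ^ 2 + 2 * (deriv ρ θ) ^ 2 - ρ θ * deriv (deriv ρ) θ)
          / (ρ θ ^ 2 + (deriv ρ θ) ^ 2)) * f (ρ θ)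
      ≤ 2 * π * f r := by
  -- smoothness of ρ
  have hρ2 : ContDiff ℝ (1 + 1) ρ := by exact_mod_cast hρ
  rw [contDiff_succ_iff_deriv] at hρ2
  obtain ⟨hρdiff, -, hρ'c1⟩ := hρ2
  have hρ'diff : Differentiable ℝ (deriv ρ) := hρ'c1.differentiable one_ne_zero
  have hρ''cont : Continuous (deriv (deriv ρ)) := (contDiff_one_iff_deriv.mp hρ'c1).2
  have hρcont : Continuous ρ := hρ.continuous
  have hρ'cont : Continuous (deriv ρ) := hρ'diff.continuous
  have hDpos : ∀ θ, 0 < ρ θ ^ 2 + (deriv ρ θ) ^ 2 := fun θ => by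
    have := hρpos θ; positivity
  -- f facts
  have hfd : ∀ x : ℝ, 0 < x → HasDerivAt f (deriv f x) x := fun x hx =>
    ((hf.contDiffAt (Ici_mem_nhds hx)).differentiableAt one_ne_zero).hasDerivAt
  have hf'le : ∀ x : ℝ, 0 < x → deriv f x ≤ 0 := by
    intro x hx
    have ht : Filter.Tendsto (slope f x) (nhdsWithin x (Set.Ioi x)) (nhds (deriv f x)) :=
      (hasDerivAt_iff_tendsto_slope.mp (hfd x hx)).mono_left
        (nhdsWithin_mono x (fun y hy => ne_of_gt hy))
    refine le_of_tendsto ht ?_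
    filter_upwards [self_mem_nhdsWithin] with y hy
    have hle : f y ≤ f x := hfmono hx.le (hx.trans (Set.mem_Ioi.mp hy)).le (Set.mem_Ioi.mp hy).le
    rw [slope_def_field]
    exact div_nonpos_of_nonpos_of_nonneg (by linarith) (sub_nonneg.mpr (Set.mem_Ioi.mp hy).le)
  -- F = f ∘ ρ
  set F : ℝ → ℝ := fun θ => f (ρ θ) with hFdef
  have hFd : ∀ θ, HasDerivAt F (deriv f (ρ θ) * deriv ρ θ) θ := fun θ =>
    (hfd (ρ θ) (hρpos θ)).comp θ (hρdiff θ).hasDerivAt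
  have hFcont : Continuous F := continuous_iff_continuousAt.mpr fun θ => (hFd θ).continuousAt
  -- g = arctan (ρ'/ρ)
  set g : ℝ → ℝ := fun θ => arctan (deriv ρ θ / ρ θ) with hgdef
  have hgd : ∀ θ, HasDerivAt g
      ((deriv (deriv ρ) θ * ρ θ - (deriv ρ θ) ^ 2) / (ρ θ ^ 2 + (deriv ρ θ) ^ 2)) θ := by
    intro θ
    have hu : HasDerivAt (fun t => deriv ρ t / ρ t)
        ((deriv (deriv ρ) θ * ρ θ - deriv ρ θ * deriv ρ θ) / ρ θ ^ 2) θ :=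
      (hρ'diff θ).hasDerivAt.div (hρdiff θ).hasDerivAt (hρpos θ).ne'
    have h := (Real.hasDerivAt_arctan (deriv ρ θ / ρ θ)).comp θ hu
    refine h.congr_deriv ?_
    have h1 : ρ θ ≠ 0 := (hρpos θ).ne'
    have h2 : ρ θ ^ 2 + (deriv ρ θ) ^ 2 ≠ 0 := (hDpos θ).ne'
    field_simp
  have hgcont : Continuous g := continuous_iff_continuousAt.mpr fun θ => (hgd θ).continuousAt
  -- continuity of the derivative expressions
  have hg'cont : Continuous fun θ =>
      (deriv (deriv ρ) θ * ρ θ - (deriv ρ θ) ^ 2) / (ρ θ ^ 2 + (deriv ρ θ) ^ 2) :=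
    ((hρ''cont.mul hρcont).sub (hρ'cont.pow 2)).div
      ((hρcont.pow 2).add (hρ'cont.pow 2)) (fun θ => (hDpos θ).ne')
  have hderivfcont : ContinuousOn (deriv f) (Set.Ioi 0) :=
    (hf.mono Set.Ioi_subset_Ici_self).continuousOn_deriv_of_isOpen isOpen_Ioi le_rfl
  have hF'cont : Continuous fun θ => deriv f (ρ θ) * deriv ρ θ :=
    (hderivfcont.comp_continuous hρcont (fun θ => hρpos θ)).mul hρ'cont
  -- periodicity at the endpoints
  have hρend : ρ (2 * π) = ρ 0 := by simpa using hper 0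
  have hρ'end : deriv ρ (2 * π) = deriv ρ 0 := by
    have h1 : deriv (fun t => ρ (t + 2 * π)) 0 = deriv ρ (0 + 2 * π) := deriv_comp_add_const ρ (2 * π) 0
    rw [funext hper] at h1
    simpa using h1.symm
  -- integration by parts
  have hibp : ∫ θ in (0:ℝ)..(2 * π),
      (deriv f (ρ θ) * deriv ρ θ * g θ +
        F θ * ((deriv (deriv ρ) θ * ρ θ - (deriv ρ θ) ^ 2) / (ρ θ ^ 2 + (deriv ρ θ) ^ 2)))
      = F (2 * π) * g (2 * π) - F 0 * g 0 :=
    integral_deriv_mul_eq_sub (fun x _ => hFd x) (fun x _ => hgd x)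
      (hF'cont.intervalIntegrable _ _) (hg'cont.intervalIntegrable _ _)
  have hgend : g (2 * π) = g 0 := by simp only [hgdef, hρend, hρ'end]
  have hFend : F (2 * π) = F 0 := by simp only [hFdef, hρend]
  rw [hgend, hFend, sub_self] at hibp
  rw [integral_add (f := fun θ => deriv f (ρ θ) * deriv ρ θ * g θ)
    (g := fun θ => F θ * ((deriv (deriv ρ) θ * ρ θ - (deriv ρ θ) ^ 2) / (ρ θ ^ 2 + (deriv ρ θ) ^ 2)))
    ((hF'cont.mul hgcont).intervalIntegrable _ _)
    ((hFcont.mul hg'cont).intervalIntegrable _ _)] at hibp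
  -- rewrite the integrand
  have hrw : (∫ θ in (0:ℝ)..(2 * π),
      ((ρ θ ^ 2 + 2 * (deriv ρ θ) ^ 2 - ρ θ * deriv (deriv ρ) θ)
        / (ρ θ ^ 2 + (deriv ρ θ) ^ 2)) * f (ρ θ))
      = ∫ θ in (0:ℝ)..(2 * π),
      (F θ - F θ * ((deriv (deriv ρ) θ * ρ θ - (deriv ρ θ) ^ 2)
        / (ρ θ ^ 2 + (deriv ρ θ) ^ 2))) := by
    apply intervalIntegral.integral_congr
    intro θ _
    have h2 : ρ θ ^ 2 + (deriv ρ θ) ^ 2 ≠ 0 := (hDpos θ).ne'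
    simp only [hFdef]
    field_simp
    ring
  rw [hrw, integral_sub (f := fun θ => F θ)
    (g := fun θ => F θ * ((deriv (deriv ρ) θ * ρ θ - (deriv ρ θ) ^ 2) / (ρ θ ^ 2 + (deriv ρ θ) ^ 2)))
    (hFcont.intervalIntegrable _ _)
    ((hFcont.mul hg'cont).intervalIntegrable _ _), hmean]
  have hsign : ∫ θ in (0:ℝ)..(2 * π), deriv f (ρ θ) * deriv ρ θ * g θ ≤ 0 := by
    have h0 : (0:ℝ) ≤ ∫ θ in (0:ℝ)..(2 * π), -(deriv f (ρ θ) * deriv ρ θ * g θ) := by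
      apply intervalIntegral.integral_nonneg_of_forall (by positivity)
      intro θ
      rw [neg_nonneg]
      have h1 : deriv f (ρ θ) ≤ 0 := hf'le (ρ θ) (hρpos θ)
      have h2 : 0 ≤ deriv ρ θ * g θ := by
        rcases le_or_gt 0 (deriv ρ θ) with h | h
        · refine mul_nonneg h ?_
          simpa [hgdef] using Real.arctan_strictMono.monotone (div_nonneg h (hρpos θ).le)
        · refine mul_nonneg_of_nonpos_of_nonpos h.le ?_
          simpa [hgdef] using
            Real.arctan_strictMono.monotone (div_nonpos_of_nonpos_of_nonneg h.le (hρpos θ).le)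
      calc deriv f (ρ θ) * deriv ρ θ * g θ = deriv f (ρ θ) * (deriv ρ θ * g θ) := by ring
        _ ≤ 0 := mul_nonpos_of_nonpos_of_nonneg h1 h2
    rw [intervalIntegral.integral_neg] at h0
    linarith
  linarith [hibp, hsign]
end

section
/- Let E ⊂ ℝ² be a convex body containing the origin with ∂E = {ρ(θ)(cos θ, sin θ)} for a Lipschitz function ρ : [0,2π] → (0,2). Then ‖ρ'‖_{L^∞} ≤ 2√(‖ρ-1‖_{L^∞}) · (1 + ‖ρ-1‖_{L^∞})/(1 - ‖ρ-1‖_{L^∞}), provided ‖ρ-1‖_{L^∞} < 1. -/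
open Real Set Filter Topology

/-- One-sided derivative comparison from the right. -/
lemma deriv_le_right {f g : ℝ → ℝ} {a b fd gd : ℝ} (hf : HasDerivAt f fd a)
    (hg : HasDerivAt g gd a) (hab : a < b) (h0 : f a = g a)
    (hle : ∀ x ∈ Set.Ioo a b, f x ≤ g x) : fd ≤ gd := by
  have hmono : 𝓝[>] a ≤ 𝓝[≠] a :=
    nhdsWithin_mono _ (fun x hx => ne_of_gt hx)
  have hf' : Tendsto (slope f a) (𝓝[>] a) (𝓝 fd) :=
    (hasDerivAt_iff_tendsto_slope.1 hf).mono_left hmono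
  have hg' : Tendsto (slope g a) (𝓝[>] a) (𝓝 gd) :=
    (hasDerivAt_iff_tendsto_slope.1 hg).mono_left hmono
  refine le_of_tendsto_of_tendsto hf' hg' ?_
  filter_upwards [Ioo_mem_nhdsGT hab] with x hx
  have hxa : 0 < x - a := by simp [sub_pos, hx.1]
  simp only [slope_def_field, div_eq_mul_inv]
  have := hle x hx
  rw [h0]
  have h1 : f x - g a ≤ g x - g a := by linarith
  exact mul_le_mul_of_nonneg_right h1 (by positivity)

/-- One-sided derivative comparison from the left. -/
lemma deriv_le_left {f g : ℝ → ℝ} {a b fd gd : ℝ} (hf : HasDerivAt f fd a)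
    (hg : HasDerivAt g gd a) (hab : b < a) (h0 : f a = g a)
    (hle : ∀ x ∈ Set.Ioo b a, g x ≤ f x) : fd ≤ gd := by
  have hmono : 𝓝[<] a ≤ 𝓝[≠] a :=
    nhdsWithin_mono _ (fun x hx => ne_of_lt hx)
  have hf' : Tendsto (slope f a) (𝓝[<] a) (𝓝 fd) :=
    (hasDerivAt_iff_tendsto_slope.1 hf).mono_left hmono
  have hg' : Tendsto (slope g a) (𝓝[<] a) (𝓝 gd) :=
    (hasDerivAt_iff_tendsto_slope.1 hg).mono_left hmono
  refine le_of_tendsto_of_tendsto hf' hg' ?_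
  filter_upwards [Ioo_mem_nhdsLT hab] with x hx
  have hxa : x - a < 0 := by simp [sub_neg, hx.2]
  have := hle x hx
  simp only [slope_def_field]
  rw [h0, div_le_div_right_of_neg hxa]
  linarith

/-- Polar representation. -/
lemma polar_rep (x : ℝ × ℝ) (hx : 0 < x.1 ^ 2 + x.2 ^ 2) :
    ∃ ψ ∈ Set.Icc (0:ℝ) (2 * π),
      x.1 = Real.sqrt (x.1 ^ 2 + x.2 ^ 2) * Real.cos ψ ∧
      x.2 = Real.sqrt (x.1 ^ 2 + x.2 ^ 2) * Real.sin ψ := by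
  set t := Real.sqrt (x.1 ^ 2 + x.2 ^ 2) with ht
  have ht0 : 0 < t := Real.sqrt_pos.2 hx
  have ht2 : t ^ 2 = x.1 ^ 2 + x.2 ^ 2 := Real.sq_sqrt hx.le
  have hx1 : |x.1 / t| ≤ 1 := by
    rw [abs_div, abs_of_pos ht0, div_le_one ht0]
    nlinarith [abs_nonneg x.1, sq_abs x.1]
  have hx1' : -1 ≤ x.1 / t := (abs_le.1 hx1).1
  have hx1'' : x.1 / t ≤ 1 := (abs_le.1 hx1).2
  have hcos : Real.cos (Real.arccos (x.1 / t)) = x.1 / t := Real.cos_arccos hx1' hx1''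
  have hsin : Real.sin (Real.arccos (x.1 / t)) = Real.sqrt (1 - (x.1 / t) ^ 2) :=
    Real.sin_arccos _
  have hsq : Real.sqrt (1 - (x.1 / t) ^ 2) = |x.2| / t := by
    rw [show 1 - (x.1/t)^2 = (|x.2|/t)^2 by
      rw [div_pow, div_pow, sq_abs]; field_simp; nlinarith]
    exact Real.sqrt_sq (by positivity)
  rcases le_or_gt 0 x.2 with h2 | h2
  · refine ⟨Real.arccos (x.1 / t), ⟨Real.arccos_nonneg _, ?_⟩, ?_, ?_⟩
    · have := Real.arccos_le_pi (x.1 / t); nlinarith [Real.pi_pos]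
    · rw [hcos]; field_simp
    · rw [hsin, hsq, abs_of_nonneg h2]; field_simp
  · refine ⟨2 * π - Real.arccos (x.1 / t), ⟨?_, ?_⟩, ?_, ?_⟩
    · have := Real.arccos_le_pi (x.1 / t); nlinarith [Real.pi_pos]
    · have := Real.arccos_nonneg (x.1 / t); linarith
    · rw [Real.cos_sub, Real.cos_two_pi, Real.sin_two_pi, hcos]
      field_simp
      simp
    · rw [Real.sin_sub, Real.cos_two_pi, Real.sin_two_pi, hsin, hsq, abs_of_neg h2]
      field_simp
      simp
set_option maxHeartbeats 2000000 in
/-- Gradient bound for the radial function of a planar convex body close to the unit disk. -/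
theorem radial_deriv_bound_of_convex (E : Set (ℝ × ℝ)) (ρ : ℝ → ℝ) (K : NNReal)
    (hEc : IsCompact E) (hEconv : Convex ℝ E) (hEint : (interior E).Nonempty)
    (h0 : (0, 0) ∈ E)
    (hρrange : ∀ θ ∈ Set.Icc (0:ℝ) (2 * π), ρ θ ∈ Set.Ioo (0:ℝ) 2)
    (hlip : LipschitzOnWith K ρ (Set.Icc 0 (2 * π)))
    (hbd : frontier E = (fun θ => (ρ θ * Real.cos θ, ρ θ * Real.sin θ)) '' Set.Icc 0 (2 * π))
    (M : ℝ) (hM : M = sSup ((fun θ => |ρ θ - 1|) '' Set.Icc 0 (2 * π))) (hM1 : M < 1) :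
    ∀ θ ∈ Set.Icc (0:ℝ) (2 * π), ∀ d : ℝ, HasDerivAt ρ d θ →
      |d| ≤ 2 * Real.sqrt M * ((1 + M) / (1 - M)) := by
  have hπ : 0 < π := Real.pi_pos
  set I := Set.Icc (0:ℝ) (2 * π) with hI
  have h0I : (0:ℝ) ∈ I := ⟨le_refl _, by linarith⟩
  -- M bounds
  have hbdd : BddAbove ((fun θ => |ρ θ - 1|) '' I) := by
    apply IsCompact.bddAbove_image isCompact_Icc
    exact ((hlip.continuousOn.sub continuousOn_const).abs)
  have hMle : ∀ θ ∈ I, |ρ θ - 1| ≤ M := by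
    intro θ hθ
    rw [hM]
    exact le_csSup hbdd ⟨θ, hθ, rfl⟩
  have hM0 : 0 ≤ M := le_trans (abs_nonneg _) (hMle 0 h0I)
  set r := 1 - M with hrdef
  have hr : 0 < r := by simp only [hrdef]; linarith
  have hr1 : r ≤ 1 := by simp only [hrdef]; linarith
  have hρlb : ∀ θ ∈ I, r ≤ ρ θ := by
    intro θ hθ
    have := abs_le.1 (hMle θ hθ)
    simp only [hrdef]; linarith [this.1]
  have hρub : ∀ θ ∈ I, ρ θ ≤ 1 + M := by
    intro θ hθ
    have := abs_le.1 (hMle θ hθ)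
    linarith [this.2]
  have hρpos : ∀ θ ∈ I, 0 < ρ θ := fun θ hθ => lt_of_lt_of_le hr (hρlb θ hθ)
  have hEclosed : IsClosed E := hEc.isClosed
  have hfr : frontier E = E \ interior E := hEclosed.frontier_eq
  have hfrE : frontier E ⊆ E := by rw [hfr]; exact Set.diff_subset
  have hP : ∀ θ ∈ I, (ρ θ * Real.cos θ, ρ θ * Real.sin θ) ∈ frontier E := by
    intro θ hθ
    rw [hbd]
    exact ⟨θ, hθ, rfl⟩
  -- origin is interior
  have h0int : (0, 0) ∈ interior E := by
    by_contra hno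
    have : ((0:ℝ), (0:ℝ)) ∈ frontier E := by rw [hfr]; exact ⟨h0, hno⟩
    rw [hbd] at this
    obtain ⟨θ, hθ, heq⟩ := this
    have h1 : ρ θ * Real.cos θ = 0 := congrArg Prod.fst heq
    have h2 : ρ θ * Real.sin θ = 0 := congrArg Prod.snd heq
    have hpos := (hρrange θ hθ).1
    have h3 : ρ θ * (Real.sin θ ^ 2 + Real.cos θ ^ 2) = 0 := by
      linear_combination Real.sin θ * h2 + Real.cos θ * h1
    rw [Real.sin_sq_add_cos_sq] at h3
    linarith
  -- ball of radius r is inside E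
  have hball : ∀ x : ℝ × ℝ, x.1 ^ 2 + x.2 ^ 2 ≤ r ^ 2 → x ∈ E := by
    intro x hx
    rcases eq_or_lt_of_le (by positivity : (0:ℝ) ≤ x.1 ^ 2 + x.2 ^ 2) with h | h
    · have hx1 : x.1 = 0 := by nlinarith
      have hx2 : x.2 = 0 := by nlinarith
      have : x = ((0:ℝ), (0:ℝ)) := Prod.ext hx1 hx2
      rw [this]; exact h0
    · obtain ⟨ψ, hψ, hc, hs⟩ := polar_rep x h
      set t := Real.sqrt (x.1 ^ 2 + x.2 ^ 2) with htdef
      have ht0 : 0 < t := Real.sqrt_pos.2 h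
      have htr : t ≤ r := by
        rw [htdef]
        calc Real.sqrt (x.1^2+x.2^2) ≤ Real.sqrt (r^2) := Real.sqrt_le_sqrt hx
        _ = r := Real.sqrt_sq hr.le
      have hρψ := hρlb ψ hψ
      have hρψ0 := hρpos ψ hψ
      have hPE : (ρ ψ * Real.cos ψ, ρ ψ * Real.sin ψ) ∈ E := hfrE (hP ψ hψ)
      have hcomb := hEconv hPE h0 (a := t / ρ ψ) (b := 1 - t / ρ ψ)
        (by positivity) (by rw [sub_nonneg, div_le_one hρψ0]; linarith) (by ring)
      have : (t / ρ ψ) • ((ρ ψ * Real.cos ψ, ρ ψ * Real.sin ψ) : ℝ × ℝ)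
          + (1 - t / ρ ψ) • ((0:ℝ), (0:ℝ)) = x := by
        simp only [Prod.smul_mk, smul_eq_mul, Prod.mk_add_mk, mul_zero, add_zero]
        rw [Prod.ext_iff]
        constructor
        · simp only []; rw [hc]; field_simp
        · simp only []; rw [hs]; field_simp
      rwa [this] at hcomb
  -- points of E on a ray are within the radial function
  have hray : ∀ β ∈ I, ∀ t : ℝ, 0 ≤ t → (t * Real.cos β, t * Real.sin β) ∈ E → t ≤ ρ β := by
    intro β hβ t ht hmem
    by_contra hgt
    push_neg at hgt
    have hρβ := hρpos β hβ
    have ht0 : 0 < t := lt_trans hρβ hgt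
    have hcomb := hEconv.combo_interior_closure_mem_interior h0int
      (subset_closure hmem) (a := 1 - ρ β / t) (b := ρ β / t)
      (by rw [sub_pos, div_lt_one ht0]; exact hgt) (by positivity) (by ring)
    have heq : (1 - ρ β / t) • ((0:ℝ), (0:ℝ)) + (ρ β / t) • ((t * Real.cos β, t * Real.sin β) : ℝ × ℝ)
        = (ρ β * Real.cos β, ρ β * Real.sin β) := by
      simp only [Prod.smul_mk, smul_eq_mul, Prod.mk_add_mk, mul_zero, zero_add]
      rw [Prod.ext_iff]
      constructor
      · simp only []; field_simp
      · simp only []; field_simp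
    rw [heq] at hcomb
    have := hP β hβ
    rw [hfr] at this
    exact this.2 hcomb
  -- KEY GEOMETRIC LEMMA
  have hkey : ∀ α ∈ I, ∀ β ∈ I, |β - α| ≤ Real.arccos (r / ρ α) →
      r ≤ ρ β * Real.cos (Real.arccos (r / ρ α) - |β - α|) := by
    intro α hα β hβ hsγ
    have hρα0 : 0 < ρ α := hρpos α hα
    have hdiv0 : 0 < r / ρ α := by positivity
    have hdiv1 : r / ρ α ≤ 1 := (div_le_one hρα0).2 (hρlb α hα)
    set γ := Real.arccos (r / ρ α) with hγdef
    have hcosγ : Real.cos γ = r / ρ α := Real.cos_arccos (by linarith) hdiv1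
    have hrρ : ρ α * Real.cos γ = r := by rw [hcosγ]; field_simp
    have hγ0 : 0 ≤ γ := Real.arccos_nonneg _
    have hγlt : γ < π / 2 := Real.arccos_lt_pi_div_two.2 hdiv0
    set s := |β - α| with hsdef
    have hs0 : 0 ≤ s := abs_nonneg _
    rcases eq_or_lt_of_le hs0 with hs | hs
    · -- s = 0, so β = α
      have hβα : β = α := by
        have := abs_eq_zero.1 hs.symm
        linarith [this]
      rw [← hs, sub_zero, hcosγ, hβα]
      rw [mul_div_assoc']
      rw [mul_comm, mul_div_assoc, div_self hρα0.ne', mul_one]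
    · -- 0 < s
      have hγpos : 0 < γ := lt_of_lt_of_le hs hsγ
      have hsinγ : 0 < Real.sin γ := Real.sin_pos_of_pos_of_lt_pi hγpos (by linarith)
      have hsins : 0 < Real.sin s := Real.sin_pos_of_pos_of_lt_pi hs (by linarith)
      have hγs0 : 0 ≤ γ - s := by linarith
      have hcosγs : 0 < Real.cos (γ - s) :=
        Real.cos_pos_of_mem_Ioo ⟨by linarith, by linarith⟩
      have hsinγs : 0 ≤ Real.sin (γ - s) :=
        Real.sin_nonneg_of_nonneg_of_le_pi hγs0 (by linarith)
      have hcosγ0 : 0 < Real.cos γ := by rw [hcosγ]; positivity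
      set ε : ℝ := if α ≤ β then 1 else -1 with hεdef
      have hβeq : β = α + ε * s := by
        by_cases h : α ≤ β
        · simp only [hεdef, if_pos h, one_mul, hsdef, abs_of_nonneg (sub_nonneg.2 h)]; ring
        · push_neg at h
          simp only [hεdef, if_neg (not_le.2 h), hsdef,
            abs_of_nonpos (by linarith : β - α ≤ 0)]; ring
      have hε : ε = 1 ∨ ε = -1 := by
        by_cases h : α ≤ β <;> simp [hεdef, h]
      have hsinε : Real.sin (ε * γ) = ε * Real.sin γ := by
        rcases hε with h | h <;> simp [h, Real.sin_neg]
      have hcosε : Real.cos (ε * γ) = Real.cos γ := by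
        rcases hε with h | h <;> simp [h, Real.cos_neg]
      have hsinεs : Real.sin (ε * s) = ε * Real.sin s := by
        rcases hε with h | h <;> simp [h, Real.sin_neg]
      have hcosεs : Real.cos (ε * s) = Real.cos s := by
        rcases hε with h | h <;> simp [h, Real.cos_neg]
      have hT : ((r * Real.cos (α + ε * γ), r * Real.sin (α + ε * γ)) : ℝ × ℝ) ∈ E := by
        apply hball
        simp only []
        nlinarith [Real.sin_sq_add_cos_sq (α + ε * γ)]
      have hQ : ((ρ α * Real.cos α, ρ α * Real.sin α) : ℝ × ℝ) ∈ E := hfrE (hP α hα)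
      set c := Real.sin s / (Real.sin γ * Real.cos (γ - s)) with hcdef
      have hc0 : 0 ≤ c := div_nonneg hsins.le (mul_pos hsinγ hcosγs).le
      have hexp : Real.sin s = Real.sin γ * Real.cos (γ - s) - Real.cos γ * Real.sin (γ - s) := by
        have h := Real.sin_sub γ (γ - s)
        simpa using h
      have hsle : Real.sin s ≤ Real.sin γ * Real.cos (γ - s) := by
        rw [hexp, sub_le_self_iff]
        exact mul_nonneg hcosγ0.le hsinγs
      have hc1 : c ≤ 1 := by
        rw [hcdef, div_le_one (mul_pos hsinγ hcosγs)]; exact hsle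
      set t' := r / Real.cos (γ - s) with ht'def
      have ht'0 : 0 ≤ t' := div_nonneg hr.le hcosγs.le
      have id2 : c * (r * Real.sin γ) = t' * Real.sin s := by
        rw [hcdef, ht'def]
        field_simp
      have hραeq : ρ α = r / Real.cos γ := by
        rw [eq_div_iff hcosγ0.ne']; linarith
      have key1 : Real.sin s * Real.cos γ ^ 2 + Real.sin γ * Real.cos (γ - s) - Real.sin s
          = Real.cos s * Real.sin γ * Real.cos γ := by
        rw [Real.cos_sub]
        linear_combination Real.sin s * Real.sin_sq_add_cos_sq γ
      have id1 : c * (r * Real.cos γ) + (1 - c) * ρ α = t' * Real.cos s := by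
        rw [hcdef, ht'def, hραeq]
        field_simp
        linear_combination key1
      have hX : (c • ((r * Real.cos (α + ε * γ), r * Real.sin (α + ε * γ)) : ℝ × ℝ)
          + (1 - c) • ((ρ α * Real.cos α, ρ α * Real.sin α) : ℝ × ℝ))
          = ((t' * Real.cos β, t' * Real.sin β) : ℝ × ℝ) := by
        rw [hβeq]
        simp only [Prod.smul_mk, smul_eq_mul, Prod.mk_add_mk, Prod.ext_iff]
        constructor
        · simp only [Real.cos_add, hcosε, hsinε, hcosεs, hsinεs]
          linear_combination Real.cos α * id1 - ε * Real.sin α * id2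
        · simp only [Real.sin_add, hcosε, hsinε, hcosεs, hsinεs]
          linear_combination Real.sin α * id1 + ε * Real.cos α * id2
      have hXE : ((t' * Real.cos β, t' * Real.sin β) : ℝ × ℝ) ∈ E := by
        rw [← hX]
        exact hEconv hT hQ hc0 (by linarith) (by ring)
      have hfin := hray β hβ t' ht'0 hXE
      rw [ht'def, div_le_iff₀ hcosγs] at hfin
      linarith
  -- CALCULUS PART
  intro θ₀ hθ₀ d hd
  have hρ₀pos : 0 < ρ θ₀ := hρpos θ₀ hθ₀
  have hdiv0 : 0 < r / ρ θ₀ := by positivity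
  have hdiv1 : r / ρ θ₀ ≤ 1 := (div_le_one hρ₀pos).2 (hρlb θ₀ hθ₀)
  set γ₀ := Real.arccos (r / ρ θ₀) with hγ₀def
  have hcos₀ : Real.cos γ₀ = r / ρ θ₀ := Real.cos_arccos (by linarith) hdiv1
  have hγ₀0 : 0 ≤ γ₀ := Real.arccos_nonneg _
  have hγ₀lt : γ₀ < π / 2 := Real.arccos_lt_pi_div_two.2 hdiv0
  have hcosγ₀ : 0 < Real.cos γ₀ := by rw [hcos₀]; positivity
  have hsinγ₀ : 0 ≤ Real.sin γ₀ := Real.sin_nonneg_of_nonneg_of_le_pi hγ₀0 (by linarith)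
  set B := r * Real.sin γ₀ / Real.cos γ₀ ^ 2 with hBdef
  have hB0 : 0 ≤ B := by
    rw [hBdef]
    exact div_nonneg (mul_nonneg hr.le hsinγ₀) (sq_nonneg _)
  have cos_anti : ∀ a b : ℝ, 0 ≤ a → b ≤ π → a ≤ b → Real.cos b ≤ Real.cos a := by
    intro a b ha hb hab
    rcases eq_or_lt_of_le hab with rfl | h
    · exact le_refl _
    · exact (Real.cos_lt_cos_of_nonneg_of_le_pi ha hb h).le
  -- pointwise upper bound
  have hub : ∀ x ∈ I, 0 < |x - θ₀| → |x - θ₀| < π / 2 - γ₀ →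
      ρ x ≤ r / Real.cos (γ₀ + |x - θ₀|) := by
    intro x hx h1 h2
    have habs0 : (0:ℝ) ≤ |x - θ₀| := abs_nonneg _
    have hρx := hρpos x hx
    have hγx0 : 0 ≤ Real.arccos (r / ρ x) := Real.arccos_nonneg _
    have hγxpi : Real.arccos (r / ρ x) ≤ π := Real.arccos_le_pi _
    have hcosγx : Real.cos (Real.arccos (r / ρ x)) = r / ρ x :=
      Real.cos_arccos (le_trans (by norm_num) (by positivity : (0:ℝ) ≤ r / ρ x))
        ((div_le_one hρx).2 (hρlb x hx))
    have hcγ₀h : 0 < Real.cos (γ₀ + |x - θ₀|) :=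
      Real.cos_pos_of_mem_Ioo ⟨by linarith, by linarith⟩
    rw [le_div_iff₀ hcγ₀h]
    by_cases hcase : |x - θ₀| ≤ Real.arccos (r / ρ x)
    · have hk := hkey x hx θ₀ hθ₀ (by rwa [abs_sub_comm])
      rw [abs_sub_comm] at hk
      have hc1 : Real.cos γ₀ ≤ Real.cos (Real.arccos (r / ρ x) - |x - θ₀|) := by
        rw [hcos₀, div_le_iff₀ hρ₀pos]
        linarith
      have hc2 : Real.arccos (r / ρ x) - |x - θ₀| ≤ γ₀ := by
        by_contra hcon
        push_neg at hcon
        have := Real.cos_lt_cos_of_nonneg_of_le_pi hγ₀0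
          (by linarith : Real.arccos (r / ρ x) - |x - θ₀| ≤ π) hcon
        linarith
      have hc3 : Real.cos (γ₀ + |x - θ₀|) ≤ r / ρ x := by
        rw [← hcosγx]
        exact cos_anti _ _ hγx0 (by linarith) (by linarith)
      have := (le_div_iff₀ hρx).1 hc3
      linarith [mul_comm (Real.cos (γ₀ + |x - θ₀|)) (ρ x)]
    · push_neg at hcase
      have hch : Real.cos |x - θ₀| ≤ r / ρ x := by
        rw [← hcosγx]
        exact cos_anti _ _ hγx0 (by linarith) hcase.le
      have hc4 : Real.cos (γ₀ + |x - θ₀|) ≤ Real.cos |x - θ₀| :=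
        cos_anti _ _ habs0 (by linarith) (by linarith)
      have := (le_div_iff₀ hρx).1 hch
      nlinarith
  -- pointwise lower bound
  have hlb : ∀ x ∈ I, |x - θ₀| ≤ γ₀ → r / Real.cos (γ₀ - |x - θ₀|) ≤ ρ x := by
    intro x hx hxγ
    have habs0 : (0:ℝ) ≤ |x - θ₀| := abs_nonneg _
    have hk := hkey θ₀ hθ₀ x hx hxγ
    have hc : 0 < Real.cos (γ₀ - |x - θ₀|) :=
      Real.cos_pos_of_mem_Ioo ⟨by linarith, by linarith⟩
    rw [div_le_iff₀ hc]
    linarith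
  -- derivatives of the comparison functions
  have hin : HasDerivAt (fun x : ℝ => γ₀ + (x - θ₀)) 1 θ₀ := by
    simpa using ((hasDerivAt_id θ₀).sub_const θ₀).const_add γ₀
  have hcosd : HasDerivAt (fun x => Real.cos (γ₀ + (x - θ₀))) (-Real.sin γ₀) θ₀ := by
    have h := hin.cos
    simpa using h
  have hUderiv : HasDerivAt (fun x => r / Real.cos (γ₀ + (x - θ₀))) B θ₀ := by
    have h := (hasDerivAt_const θ₀ r).div hcosd (by simpa using hcosγ₀.ne')
    refine h.congr_deriv ?_
    rw [hBdef]
    simp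
  have hin2 : HasDerivAt (fun x : ℝ => γ₀ - (x - θ₀)) (-1) θ₀ := by
    simpa using (((hasDerivAt_id θ₀).sub_const θ₀).const_sub γ₀)
  have hcosd2 : HasDerivAt (fun x => Real.cos (γ₀ - (x - θ₀))) (Real.sin γ₀) θ₀ := by
    have h := hin2.cos
    simpa using h
  have hLderiv : HasDerivAt (fun x => r / Real.cos (γ₀ - (x - θ₀))) (-B) θ₀ := by
    have h := (hasDerivAt_const θ₀ r).div hcosd2 (by simpa using hcosγ₀.ne')
    refine h.congr_deriv ?_
    rw [hBdef]
    simp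
    ring
  have hUθ₀ : r / Real.cos (γ₀ + (θ₀ - θ₀)) = ρ θ₀ := by
    rw [sub_self, add_zero, hcos₀]
    field_simp
  have hLθ₀ : r / Real.cos (γ₀ - (θ₀ - θ₀)) = ρ θ₀ := by
    rw [sub_self, sub_zero, hcos₀]
    field_simp
  -- |d| ≤ B
  have habs : |d| ≤ B := by
    rcases lt_or_eq_of_le hθ₀.2 with hlt | heq
    · -- right side
      have hub' : d ≤ B := by
        refine deriv_le_right hd hUderiv
          (b := min (2 * π) (θ₀ + (π / 2 - γ₀))) (lt_min hlt (by linarith)) hUθ₀.symm ?_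
        intro x hx
        have hxI : x ∈ I := ⟨by linarith [hθ₀.1, hx.1],
          le_of_lt (lt_of_lt_of_le hx.2 (min_le_left _ _))⟩
        have hxpos : 0 < x - θ₀ := sub_pos.2 hx.1
        have h2 : x - θ₀ < π / 2 - γ₀ := by
          have := lt_of_lt_of_le hx.2 (min_le_right _ _); linarith
        have := hub x hxI (by rwa [abs_of_pos hxpos]) (by rwa [abs_of_pos hxpos])
        rwa [abs_of_pos hxpos] at this
      have hlb' : -B ≤ d := by
        rcases eq_or_lt_of_le hγ₀0 with hγeq | hγpos
        · have hρr : ρ θ₀ = r := by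
            have h1 : Real.cos γ₀ = 1 := by rw [← hγeq, Real.cos_zero]
            rw [hcos₀] at h1
            field_simp at h1
            linarith
          have hBz : B = 0 := by rw [hBdef, ← hγeq]; simp
          have h0d : (0:ℝ) ≤ d := by
            refine deriv_le_right (hasDerivAt_const θ₀ (ρ θ₀)) hd (b := 2 * π) hlt rfl ?_
            intro x hx
            have hxI : x ∈ I := ⟨by linarith [hθ₀.1, hx.1], hx.2.le⟩
            rw [hρr]
            exact hρlb x hxI
          rw [hBz]; linarith
        · refine le_trans (le_of_eq rfl) ?_
          refine deriv_le_right hLderiv hd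
            (b := min (2 * π) (θ₀ + γ₀)) (lt_min hlt (by linarith)) hLθ₀ ?_
          intro x hx
          have hxI : x ∈ I := ⟨by linarith [hθ₀.1, hx.1],
            le_of_lt (lt_of_lt_of_le hx.2 (min_le_left _ _))⟩
          have hxpos : 0 < x - θ₀ := sub_pos.2 hx.1
          have h2 : x - θ₀ ≤ γ₀ := by
            have := lt_of_lt_of_le hx.2 (min_le_right _ _); linarith
          have := hlb x hxI (by rwa [abs_of_pos hxpos])
          rwa [abs_of_pos hxpos] at this
      exact abs_le.2 ⟨hlb', hub'⟩
    · -- left side : θ₀ = 2π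
      have hθpos : 0 < θ₀ := by rw [heq]; linarith
      have hub' : d ≤ B := by
        rcases eq_or_lt_of_le hγ₀0 with hγeq | hγpos
        · have hρr : ρ θ₀ = r := by
            have h1 : Real.cos γ₀ = 1 := by rw [← hγeq, Real.cos_zero]
            rw [hcos₀] at h1
            field_simp at h1
            linarith
          have hBz : B = 0 := by rw [hBdef, ← hγeq]; simp
          have h0d : d ≤ 0 := by
            refine deriv_le_left hd (hasDerivAt_const θ₀ (ρ θ₀)) (b := 0) hθpos rfl ?_
            intro x hx
            have hxI : x ∈ I := ⟨hx.1.le, by linarith [hx.2, heq.le]⟩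
            rw [hρr]
            exact hρlb x hxI
          rw [hBz]; linarith
        · refine deriv_le_left hd hUderiv
            (b := max 0 (θ₀ - γ₀)) (max_lt hθpos (by linarith)) hUθ₀.symm ?_
          intro x hx
          have hx0 : 0 < x := lt_of_le_of_lt (le_max_left _ _) hx.1
          have hxI : x ∈ I := ⟨hx0.le, by linarith [hx.2, heq.le]⟩
          have hxneg : x - θ₀ < 0 := sub_neg.2 hx.2
          have habseq : |x - θ₀| = -(x - θ₀) := abs_of_neg hxneg
          have h2 : |x - θ₀| ≤ γ₀ := by
            rw [habseq]
            have := lt_of_le_of_lt (le_max_right _ _) hx.1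
            linarith
          have := hlb x hxI h2
          rw [habseq] at this
          rw [show γ₀ - -(x - θ₀) = γ₀ + (x - θ₀) from by ring] at this
          exact this
      have hlb' : -B ≤ d := by
        refine deriv_le_left hLderiv hd
          (b := max 0 (θ₀ - (π / 2 - γ₀))) (max_lt hθpos (by linarith)) hLθ₀ ?_
        intro x hx
        have hx0 : 0 < x := lt_of_le_of_lt (le_max_left _ _) hx.1
        have hxI : x ∈ I := ⟨hx0.le, by linarith [hx.2, heq.le]⟩
        have hxneg : x - θ₀ < 0 := sub_neg.2 hx.2
        have habseq : |x - θ₀| = -(x - θ₀) := abs_of_neg hxneg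
        have h1 : 0 < |x - θ₀| := by rw [habseq]; linarith
        have h2 : |x - θ₀| < π / 2 - γ₀ := by
          rw [habseq]
          have := lt_of_le_of_lt (le_max_right _ _) hx.1
          linarith
        have := hub x hxI h1 h2
        rw [habseq] at this
        rw [show γ₀ + -(x - θ₀) = γ₀ - (x - θ₀) from by ring] at this
        exact this
      exact abs_le.2 ⟨hlb', hub'⟩
  -- final numeric bound
  have hsin₀ : Real.sin γ₀ = Real.sqrt (1 - (r / ρ θ₀) ^ 2) := Real.sin_arccos _
  have hsub0 : 0 ≤ 1 - (r / ρ θ₀) ^ 2 := by nlinarith [hdiv0, hdiv1]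
  have hsub0' : 0 ≤ ρ θ₀ ^ 2 - r ^ 2 := by
    have := hρlb θ₀ hθ₀; nlinarith
  have h2 : Real.sqrt (1 - (r / ρ θ₀) ^ 2) = Real.sqrt (ρ θ₀ ^ 2 - r ^ 2) / ρ θ₀ := by
    rw [eq_div_iff hρ₀pos.ne']
    have hh : ρ θ₀ ^ 2 - r ^ 2 = (1 - (r / ρ θ₀) ^ 2) * ρ θ₀ ^ 2 := by
      field_simp
    rw [hh, Real.sqrt_mul hsub0, Real.sqrt_sq hρ₀pos.le]
  have hBeq : B = ρ θ₀ * Real.sqrt (ρ θ₀ ^ 2 - r ^ 2) / r := by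
    rw [hBdef, hsin₀, hcos₀, h2]
    field_simp
  have hs1 : Real.sqrt (ρ θ₀ ^ 2 - r ^ 2) ≤ 2 * Real.sqrt M := by
    have hle4 : ρ θ₀ ^ 2 - r ^ 2 ≤ 4 * M := by
      have := hρub θ₀ hθ₀
      nlinarith [hρ₀pos]
    calc Real.sqrt (ρ θ₀ ^ 2 - r ^ 2) ≤ Real.sqrt (4 * M) := Real.sqrt_le_sqrt hle4
      _ = 2 * Real.sqrt M := by
          rw [show (4:ℝ) * M = 2 ^ 2 * M by ring, Real.sqrt_mul (by positivity) M,
            Real.sqrt_sq (by norm_num)]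
  calc |d| ≤ B := habs
    _ = ρ θ₀ * Real.sqrt (ρ θ₀ ^ 2 - r ^ 2) / r := hBeq
    _ ≤ (1 + M) * (2 * Real.sqrt M) / r := by
        gcongr
        · exact hρub θ₀ hθ₀
    _ = 2 * Real.sqrt M * ((1 + M) / (1 - M)) := by
        rw [hrdef]; ring
end

section
/- Let h : ℝⁿ\{0} → (0,∞) be positively homogeneous of degree 0 and C¹. Then for every x ∈ Sⁿ⁻¹, ⟨x, ∇h(x)⟩ = 0, and the outward unit normal to the set E = {t·x·h(x) : x ∈ Sⁿ⁻¹, t ∈ (0,1)} at the boundary point x·h(x) equals (x·h(x) - ∇h(x))/√(h(x)² + |∇h(x)|²). -/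
open Real
open scoped RealInnerProductSpace

/-- For a `C¹`, positively 0-homogeneous radial function `h`, the gradient is tangent to
the sphere, and the vector `(h(x)x - ∇h(x))/√(h² + |∇h|²)` is the outward unit normal to
the star-shaped set with radial function `h` at the boundary point `h(x)x`: it has unit
norm, annihilates the tangent space of the boundary (the image under the differential of
`Φ(x) = h(x)x` of the tangent space of the sphere), and points outward. -/
theorem outward_normal_starshaped (n : ℕ) (hn : 2 ≤ n)
    (h : EuclideanSpace ℝ (Fin n) → ℝ)
    (hpos : ∀ x, x ≠ 0 → 0 < h x)
    (hhom : ∀ (c : ℝ), 0 < c → ∀ x, x ≠ 0 → h (c • x) = h x)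
    (hC1 : ContDiffOn ℝ 1 h {(0 : EuclideanSpace ℝ (Fin n))}ᶜ) :
    ∀ x : EuclideanSpace ℝ (Fin n), ‖x‖ = 1 →
      ⟪x, gradient h x⟫ = 0 ∧
      (let ν : EuclideanSpace ℝ (Fin n) :=
          (Real.sqrt ((h x) ^ 2 + ‖gradient h x‖ ^ 2))⁻¹ • (h x • x - gradient h x);
        ‖ν‖ = 1 ∧ 0 < ⟪h x • x, ν⟫ ∧
          ∀ v : EuclideanSpace ℝ (Fin n), ⟪v, x⟫ = 0 →
            ⟪fderiv ℝ (fun y => h y • y) x v, ν⟫ = 0) := by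
  intro x hx
  have hx0 : x ≠ 0 := by intro hh; rw [hh] at hx; simp at hx
  have hd : DifferentiableAt ℝ h x :=
    (hC1.contDiffAt ((isOpen_compl_singleton).mem_nhds hx0)).differentiableAt one_ne_zero
  have hgrad : HasGradientAt h (gradient h x) x := hd.hasGradientAt
  have hfd : ∀ v, fderiv ℝ h x v = ⟪gradient h x, v⟫ := by
    intro v
    rw [hd.hasFDerivAt.unique hgrad.hasFDerivAt]
    rfl
  -- radial derivative vanishes
  have hkey : fderiv ℝ h x x = 0 := by
    have h1 : HasDerivAt (fun t : ℝ => t • x) x 1 := by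
      simpa using (hasDerivAt_id (1 : ℝ)).smul_const x
    have h2 : HasDerivAt (fun t : ℝ => h (t • x)) (fderiv ℝ h x x) 1 := by
      have hd1 : DifferentiableAt ℝ h ((1 : ℝ) • x) := by simpa using hd
      have := hd1.hasFDerivAt.comp_hasDerivAt (1 : ℝ) h1
      simpa [Function.comp_def] using this
    have h3 : (fun t : ℝ => h (t • x)) =ᶠ[nhds (1 : ℝ)] fun _ => h x := by
      filter_upwards [lt_mem_nhds (show (0 : ℝ) < 1 by norm_num)] with t ht
      exact hhom t ht x hx0
    have h4 : HasDerivAt (fun t : ℝ => h (t • x)) 0 1 :=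
      (hasDerivAt_const (1 : ℝ) (h x)).congr_of_eventuallyEq h3
    exact h2.unique h4
  have horth : ⟪x, gradient h x⟫ = 0 := by
    rw [real_inner_comm, ← hfd, hkey]
  have hgx : ⟪gradient h x, x⟫ = 0 := by rw [real_inner_comm]; exact horth
  have hxx : ⟪x, x⟫ = 1 := by
    rw [real_inner_self_eq_norm_sq, hx]; norm_num
  have hhx : 0 < h x := hpos x hx0
  set g := gradient h x with hg
  set s : ℝ := (h x) ^ 2 + ‖g‖ ^ 2 with hs
  have hspos : 0 < s := by positivity
  have hsqrt : 0 < Real.sqrt s := Real.sqrt_pos.mpr hspos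
  have hnormsq : ‖h x • x - g‖ ^ 2 = s := by
    rw [← real_inner_self_eq_norm_sq]
    rw [inner_sub_sub_self]
    simp only [real_inner_smul_left, real_inner_smul_right, real_inner_self_eq_norm_sq,
      horth, hgx]
    rw [hs, norm_smul, hx, mul_one, Real.norm_eq_abs, sq_abs]
    ring
  refine ⟨horth, ?_, ?_, ?_⟩
  · -- norm of ν is 1
    show ‖(Real.sqrt s)⁻¹ • (h x • x - g)‖ = 1
    rw [norm_smul, Real.norm_eq_abs, abs_inv, abs_of_pos hsqrt]
    have : ‖h x • x - g‖ = Real.sqrt s := by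
      rw [← Real.sqrt_sq (norm_nonneg _), hnormsq]
    rw [this]
    field_simp
  · -- outward
    show 0 < ⟪h x • x, (Real.sqrt s)⁻¹ • (h x • x - g)⟫
    have e : ⟪h x • x, (Real.sqrt s)⁻¹ • (h x • x - g)⟫ = (Real.sqrt s)⁻¹ * (h x * h x) := by
      rw [real_inner_smul_right, inner_sub_right, real_inner_smul_left,
        real_inner_smul_left, real_inner_smul_right, hxx, horth]
      ring
    rw [e]
    positivity
  · intro v hv
    show ⟪fderiv ℝ (fun y => h y • y) x v, (Real.sqrt s)⁻¹ • (h x • x - g)⟫ = 0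
    have hdid : DifferentiableAt ℝ (fun y : EuclideanSpace ℝ (Fin n) => y) x :=
      differentiableAt_fun_id
    have hder : fderiv ℝ (fun y => h y • y) x v = fderiv ℝ h x v • x + h x • v := by
      have := fderiv_smul (𝕜 := ℝ) hd hdid
      rw [show (fun y => h y • y) = h • fun y => y from rfl, this]
      simp [add_comm]
    rw [hder, hfd]
    have hvx : ⟪x, v⟫ = 0 := by rw [real_inner_comm]; exact hv
    rw [real_inner_smul_right, inner_add_left, real_inner_smul_left, real_inner_smul_left,
      inner_sub_right, inner_sub_right, real_inner_smul_right, real_inner_smul_right,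
      hxx, hv, horth, real_inner_comm v g]
    ring
end
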